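/- arXiv:2505.22329 — 2 statements merged into one kernel-verified Lean document; each statement's English description precedes it below -/
import Mathlib

section
/- Let H : ℝⁿ → [0,∞) be positive on nonzero vectors, convex, absolutely 1-homogeneous, C¹ away from 0, with dual H₀(ξ) = sup_{x ≠ 0} ⟨ξ, x⟩/H(x). Let p > 1, let u, v : ℝⁿ → ℝ be differentiable with u ≥ 0 and v > 0, and assume the gradients ∇u(x), ∇v(x) are nonzero where needed. Define L(u,v)(x) = H(∇u)^p + (p−1) H((u/v)∇v)^p − p H((u/v)∇v)^{p−1} ⟨∇H(∇v), ∇u⟩. Then L(u,v)(x) ≥ 0 at every point x. -/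
open Filter Topology

/-- Subadditivity from convexity + homogeneity. -/
lemma H_subadd {E : Type*} [NormedAddCommGroup E] [NormedSpace ℝ E]
    (H : E → ℝ) (hconvex : ConvexOn ℝ Set.univ H)
    (hhom : ∀ (t : ℝ) (x : E), H (t • x) = |t| * H x) (a b : E) :
    H (a + b) ≤ H a + H b := by
  have h2 : a + b = (2 : ℝ) • (((1:ℝ)/2) • a + ((1:ℝ)/2) • b) := by
    rw [smul_add, smul_smul, smul_smul]; norm_num
  have hc := hconvex.2 (Set.mem_univ a) (Set.mem_univ b)
    (by norm_num : (0:ℝ) ≤ 1/2) (by norm_num : (0:ℝ) ≤ 1/2) (by norm_num)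
  rw [h2, hhom]
  rw [show |(2:ℝ)| = 2 by norm_num]
  simp only [smul_eq_mul] at hc
  linarith

/-- Key gradient inequality: ⟨∇H(z), w⟩ ≤ H(w). -/
lemma H_grad_le {n : ℕ} (H : EuclideanSpace ℝ (Fin n) → ℝ)
    (hconvex : ConvexOn ℝ Set.univ H)
    (hhom : ∀ (t : ℝ) (x : EuclideanSpace ℝ (Fin n)), H (t • x) = |t| * H x)
    (z : EuclideanSpace ℝ (Fin n)) (hz : z ≠ 0)
    (hdz : DifferentiableAt ℝ H z) (w : EuclideanSpace ℝ (Fin n)) :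
    (inner ℝ (gradient H z) w : ℝ) ≤ H w := by
  set φ : ℝ → ℝ := fun t => H (z + t • w) with hφ
  have hline : HasDerivAt (fun t : ℝ => z + t • w) w 0 := by
    simpa using ((hasDerivAt_id (0:ℝ)).smul_const w).const_add z
  have hgrad : HasGradientAt H (gradient H z) z := hdz.hasGradientAt
  have hfd : HasFDerivAt H (fderiv ℝ H z) z := hdz.hasFDerivAt
  have hder : HasDerivAt φ ((inner ℝ (gradient H z) w : ℝ)) 0 := by
    have hfd' : HasFDerivAt H (fderiv ℝ H z) ((fun t : ℝ => z + t • w) 0) := by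
      simpa using hfd
    have := hfd'.comp_hasDerivAt 0 hline
    have heq : fderiv ℝ H z w = (inner ℝ (gradient H z) w : ℝ) := by
      rw [gradient]
      simp [InnerProductSpace.toDual_symm_apply]
    rw [← heq]; exact this
  -- slope bound for t > 0
  have hslope : ∀ t : ℝ, 0 < t → slope φ 0 t ≤ H w := by
    intro t ht
    have hsub : φ t ≤ φ 0 + t * H w := by
      have := H_subadd H hconvex hhom z (t • w)
      have : H (z + t • w) ≤ H z + |t| * H w := by rw [← hhom]; exact this
      simpa [φ, abs_of_pos ht] using this
    have h0 : φ 0 = H z := by simp [φ]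
    rw [slope_def_field, sub_zero, div_le_iff₀ ht]
    linarith
  have htend : Tendsto (slope φ 0) (𝓝[>] 0) (𝓝 ((inner ℝ (gradient H z) w : ℝ))) :=
    (hasDerivAt_iff_tendsto_slope.mp hder).mono_left
      (nhdsWithin_mono 0 (fun x hx => ne_of_gt hx))
  refine le_of_tendsto htend ?_
  filter_upwards [self_mem_nhdsWithin] with t ht using hslope t ht

theorem stmt_10 {n : ℕ} (H : EuclideanSpace ℝ (Fin n) → ℝ) (p : ℝ) (hp : 1 < p)
    (hnonneg : ∀ x, 0 ≤ H x)
    (hpos : ∀ x : EuclideanSpace ℝ (Fin n), x ≠ 0 → 0 < H x)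
    (hconvex : ConvexOn ℝ Set.univ H)
    (hhom : ∀ (t : ℝ) (x : EuclideanSpace ℝ (Fin n)), H (t • x) = |t| * H x)
    (hdiff : ∀ x : EuclideanSpace ℝ (Fin n), x ≠ 0 → DifferentiableAt ℝ H x)
    (u v : EuclideanSpace ℝ (Fin n) → ℝ)
    (hu : ∀ x, 0 ≤ u x) (hv : ∀ x, 0 < v x)
    (hdu : Differentiable ℝ u) (hdv : Differentiable ℝ v)
    (hgv : ∀ x, gradient v x ≠ 0) :
    ∀ x : EuclideanSpace ℝ (Fin n),
      0 ≤ H (gradient u x) ^ p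
          + (p - 1) * H ((u x / v x) • gradient v x) ^ p
          - p * H ((u x / v x) • gradient v x) ^ (p - 1)
              * (inner ℝ (gradient H (gradient v x)) (gradient u x) : ℝ) := by
  intro x
  set a : ℝ := H (gradient u x) with ha
  set b : ℝ := H ((u x / v x) • gradient v x) with hb
  set c : ℝ := (inner ℝ (gradient H (gradient v x)) (gradient u x) : ℝ) with hc
  have hca : c ≤ a :=
    H_grad_le H hconvex hhom _ (hgv x) (hdiff _ (hgv x)) _
  have ha0 : 0 ≤ a := hnonneg _
  have hb0 : 0 ≤ b := hnonneg _
  have hp0 : 0 < p := lt_trans one_pos hp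
  -- Young: a * b^(p-1) ≤ a^p/p + (b^(p-1))^q/q with q = p/(p-1)
  have hq : p.HolderConjugate (p / (p - 1)) := Real.HolderConjugate.conjExponent hp
  have hyoung := Real.young_inequality_of_nonneg ha0 (Real.rpow_nonneg hb0 (p-1)) hq
  have hp1 : p - 1 ≠ 0 := by linarith
  have hbq : (b ^ (p-1)) ^ (p / (p-1)) = b ^ p := by
    rw [← Real.rpow_mul hb0]
    congr 1
    field_simp
  rw [hbq] at hyoung
  have hsum : a ^ p / p + b ^ p / (p / (p-1)) = (a ^ p + (p-1) * b ^ p) / p := by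
    field_simp
  rw [hsum] at hyoung
  rw [le_div_iff₀ hp0] at hyoung
  have hbp : 0 ≤ b ^ (p-1) := Real.rpow_nonneg hb0 _
  nlinarith [mul_le_mul_of_nonneg_left hca (mul_nonneg hp0.le hbp)]
end

section
/- Let u, v : ℝⁿ → ℝ be differentiable with u ≥ 0 and v > 0, let p > 1, and let H : ℝⁿ → [0,∞) be C¹ away from 0, convex, absolutely 1-homogeneous, positive away from 0. Define R(u,v) = H(∇u)^p − ⟨H(∇v)^{p−1} ∇H(∇v), ∇(u^p / v^{p−1})⟩ and L(u,v) = H(∇u)^p + (p−1)H((u/v)∇v)^p − p H((u/v)∇v)^{p−1} ⟨∇H(∇v), ∇u⟩. Then R(u,v) = L(u,v) pointwise (wherever ∇v ≠ 0). -/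
open scoped RealInnerProductSpace

lemma fderiv_apply_eq_inner_gradient {n : ℕ} (f : EuclideanSpace ℝ (Fin n) → ℝ)
    (x w : EuclideanSpace ℝ (Fin n)) : fderiv ℝ f x w = ⟪gradient f x, w⟫ := by
  rw [gradient]
  rw [← InnerProductSpace.toDual_apply_apply, LinearIsometryEquiv.apply_symm_apply]

-- Euler identity
lemma euler {n : ℕ} (H : EuclideanSpace ℝ (Fin n) → ℝ)
    (hhom : ∀ (t : ℝ) (x : EuclideanSpace ℝ (Fin n)), H (t • x) = |t| * H x)
    (y : EuclideanSpace ℝ (Fin n)) (hy : y ≠ 0) (hd : DifferentiableAt ℝ H y) :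
    ⟪gradient H y, y⟫ = H y := by
  rw [← fderiv_apply_eq_inner_gradient]
  have h1 : HasDerivAt (fun t : ℝ => H (t • y)) (fderiv ℝ H y y) 1 := by
    have hsm : HasDerivAt (fun t : ℝ => t • y) y 1 := by
      simpa using (hasDerivAt_id (1:ℝ)).smul_const y
    have hd' : HasFDerivAt H (fderiv ℝ H y) ((1:ℝ) • y) := by
      rw [one_smul]; exact hd.hasFDerivAt
    exact hd'.comp_hasDerivAt 1 hsm
  have h2 : HasDerivAt (fun t : ℝ => H (t • y)) (H y) 1 := by
    have h3 : HasDerivAt (fun t : ℝ => t * H y) (H y) 1 := by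
      simpa using (hasDerivAt_id (1:ℝ)).mul_const (H y)
    apply h3.congr_of_eventuallyEq
    filter_upwards [eventually_gt_nhds (show (0:ℝ) < 1 by norm_num)] with t ht
    rw [hhom, abs_of_pos ht]
  exact h1.unique h2

theorem stmt_12 {n : ℕ} (H : EuclideanSpace ℝ (Fin n) → ℝ) (p : ℝ) (hp : 1 < p)
    (hnonneg : ∀ x, 0 ≤ H x)
    (hpos : ∀ x : EuclideanSpace ℝ (Fin n), x ≠ 0 → 0 < H x)
    (hconvex : ConvexOn ℝ Set.univ H)
    (hhom : ∀ (t : ℝ) (x : EuclideanSpace ℝ (Fin n)), H (t • x) = |t| * H x)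
    (hdiff : ∀ x : EuclideanSpace ℝ (Fin n), x ≠ 0 → DifferentiableAt ℝ H x)
    (u v : EuclideanSpace ℝ (Fin n) → ℝ)
    (hu : ∀ x, 0 ≤ u x) (hv : ∀ x, 0 < v x)
    (hdu : Differentiable ℝ u) (hdv : Differentiable ℝ v) :
    ∀ x : EuclideanSpace ℝ (Fin n), gradient v x ≠ 0 →
      H (gradient u x) ^ p
        - (inner ℝ (H (gradient v x) ^ (p - 1) • gradient H (gradient v x))
            (gradient (fun y => u y ^ p / v y ^ (p - 1)) x) : ℝ)
      = H (gradient u x) ^ p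
          + (p - 1) * H ((u x / v x) • gradient v x) ^ p
          - p * H ((u x / v x) • gradient v x) ^ (p - 1)
              * (inner ℝ (gradient H (gradient v x)) (gradient u x) : ℝ) := by
  intro x hx
  have hb0 : 0 < v x := hv x
  have hbne : v x ≠ 0 := hb0.ne'
  have ha0 : 0 ≤ u x := hu x
  have hh0 : 0 < H (gradient v x) := hpos _ hx
  -- Euler identity
  have hEuler : ⟪gradient H (gradient v x), gradient v x⟫ = H (gradient v x) :=
    euler H hhom _ hx (hdiff _ hx)
  -- homogeneity rewriting
  have hHscale : H ((u x / v x) • gradient v x) = (u x / v x) * H (gradient v x) := by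
    rw [hhom, abs_of_nonneg (div_nonneg ha0 hb0.le)]
  -- derivative of the quotient
  have hBne : v x ^ (p - 1) ≠ 0 := (Real.rpow_pos_of_pos hb0 _).ne'
  have h1 : HasFDerivAt (fun y => u y ^ p) ((p * u x ^ (p - 1)) • fderiv ℝ u x) x :=
    (hdu x).hasFDerivAt.rpow_const (Or.inr hp.le)
  have h2 : HasFDerivAt (fun y => v y ^ (p - 1))
      (((p - 1) * v x ^ (p - 1 - 1)) • fderiv ℝ v x) x :=
    (hdv x).hasFDerivAt.rpow_const (Or.inl hbne)
  have h2inv : HasFDerivAt (fun y => (v y ^ (p - 1))⁻¹)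
      ((-((v x ^ (p - 1)) ^ 2)⁻¹) • (((p - 1) * v x ^ (p - 1 - 1)) • fderiv ℝ v x)) x :=
    (hasDerivAt_inv hBne).comp_hasFDerivAt x h2
  have hF : HasFDerivAt (fun y => u y ^ p / v y ^ (p - 1))
      ((u x ^ p) • ((-((v x ^ (p - 1)) ^ 2)⁻¹) • (((p - 1) * v x ^ (p - 1 - 1)) • fderiv ℝ v x))
        + ((v x ^ (p - 1))⁻¹) • ((p * u x ^ (p - 1)) • fderiv ℝ u x)) x := by
    simp only [div_eq_mul_inv]
    exact h1.mul h2inv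
  have hf := hF.fderiv
  set w : EuclideanSpace ℝ (Fin n) :=
    H (gradient v x) ^ (p - 1) • gradient H (gradient v x) with hw
  have key : (inner ℝ w (gradient (fun y => u y ^ p / v y ^ (p - 1)) x) : ℝ) =
      fderiv ℝ (fun y => u y ^ p / v y ^ (p - 1)) x w := by
    rw [fderiv_apply_eq_inner_gradient, real_inner_comm]
  rw [key, hf]
  have hu_w : fderiv ℝ u x w = H (gradient v x) ^ (p - 1) *
      ⟪gradient H (gradient v x), gradient u x⟫ := by
    rw [fderiv_apply_eq_inner_gradient, hw, real_inner_smul_right, real_inner_comm]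
  have hv_w : fderiv ℝ v x w = H (gradient v x) ^ (p - 1) * H (gradient v x) := by
    rw [fderiv_apply_eq_inner_gradient, hw, real_inner_smul_right,
      real_inner_comm, hEuler]
  simp only [ContinuousLinearMap.add_apply, ContinuousLinearMap.smul_apply,
    ContinuousLinearMap.coe_smul', Pi.smul_apply, smul_eq_mul, hu_w, hv_w, hHscale]
  -- rpow arithmetic
  have hbp2 : v x ^ (p - 1 - 1) = v x ^ (p - 1) / v x := by
    rw [Real.rpow_sub hb0, Real.rpow_one]
  have hap : u x ^ p = u x ^ (p - 1) * u x := by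
    have h := Real.rpow_add' (y := p - 1) (z := 1) ha0 (by linarith)
    rw [show p - 1 + 1 = p by ring, Real.rpow_one] at h
    exact h
  have hhp : H (gradient v x) ^ p = H (gradient v x) ^ (p - 1) * H (gradient v x) := by
    have h := Real.rpow_add hh0 (p - 1) 1
    rw [show p - 1 + 1 = p by ring, Real.rpow_one] at h
    exact h
  have hdivp : (u x / v x * H (gradient v x)) ^ p
      = (u x ^ (p - 1) * u x) * (H (gradient v x) ^ (p - 1) * H (gradient v x))
        / (v x ^ (p - 1) * v x) := by
    rw [Real.mul_rpow (div_nonneg ha0 hb0.le) hh0.le, Real.div_rpow ha0 hb0.le,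
      ← hap, ← hhp, show v x ^ p = v x ^ (p - 1) * v x by
        have h := Real.rpow_add hb0 (p - 1) 1
        rw [show p - 1 + 1 = p by ring, Real.rpow_one] at h
        exact h]
    ring
  have hdivp1 : (u x / v x * H (gradient v x)) ^ (p - 1)
      = u x ^ (p - 1) * H (gradient v x) ^ (p - 1) / v x ^ (p - 1) := by
    rw [Real.mul_rpow (div_nonneg ha0 hb0.le) hh0.le, Real.div_rpow ha0 hb0.le]
    ring
  rw [hbp2, hap, hdivp, hdivp1]
  field_simp
  ring
end
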